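/- Let i ∈ [m] and let h_i ∈ ℝ^X be the vector with (h_i)_x = √(w(x)) if x ∈ C_i and 0 otherwise. Then for every nonnegative integer t with t·α ≤ 1: (a) for every x ∈ C_i, (1 − t·α)·√(w(x)) ≤ (((1/2)·I_N + (1/2)·Ā)^t h_i)_x ≤ √(w(x)); and (b) for every x ∉ C_i, 0 ≤ (((1/2)·I_N + (1/2)·Ā)^t h_i)_x ≤ t·α·√(w(x)). -/

import Mathlib

open Finset Matrix

/-- The degree `w(x) = ∑_{x'} w(x,x')` of a vertex in the positive-pair graph. -/
noncomputable def deg {N : ℕ} (w : Fin N → Fin N → ℝ) (x : Fin N) : ℝ := ∑ x', w x x'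

/-- The normalized adjacency matrix `Ā` with entries `w(x,x')/√(w(x)w(x'))`. -/
noncomputable def nadj {N : ℕ} (w : Fin N → Fin N → ℝ) : Matrix (Fin N) (Fin N) ℝ :=
  Matrix.of fun x x' => w x x' / Real.sqrt (deg w x * deg w x')

/-- The vector with entry `√(w(x))` on a subset `A` and `0` elsewhere. -/
noncomputable def hvec {N : ℕ} (w : Fin N → Fin N → ℝ) (A : Finset (Fin N)) :
    Fin N → ℝ :=
  fun x => if x ∈ A then Real.sqrt (deg w x) else 0

/-- The lazy random-walk matrix `(1/2)·I + (1/2)·Ā`. -/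
noncomputable def lazyA {N : ℕ} (w : Fin N → Fin N → ℝ) : Matrix (Fin N) (Fin N) ℝ :=
  ((1 : ℝ) / 2) • (1 : Matrix (Fin N) (Fin N) ℝ) + ((1 : ℝ) / 2) • nadj w

/-- Entrywise bounds on `((1/2)·I + (1/2)·Ā)^t h_i` for `t·α ≤ 1`. -/
theorem stmt6 {N m : ℕ} (w : Fin N → Fin N → ℝ)
    (hsymm : ∀ x x', w x x' = w x' x)
    (hnonneg : ∀ x x', 0 ≤ w x x')
    (hsum : ∑ x, ∑ x', w x x' = 1)
    (hdeg : ∀ x, 0 < deg w x)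
    (C : Fin m → Finset (Fin N))
    (hpart : ∀ x : Fin N, ∃! i : Fin m, x ∈ C i)
    (hne : ∀ i : Fin m, (C i).Nonempty)
    (α : ℝ) (hα0 : 0 < α) (hα1 : α < 1)
    (hexp : ∀ i : Fin m, ∀ x ∈ C i, (∑ x' ∈ (C i)ᶜ, w x x') ≤ α * deg w x)
    (i : Fin m) (t : ℕ) (ht : (t : ℝ) * α ≤ 1) :
    (∀ x ∈ C i,
        (1 - (t : ℝ) * α) * Real.sqrt (deg w x) ≤ ((lazyA w ^ t) *ᵥ hvec w (C i)) x ∧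
        ((lazyA w ^ t) *ᵥ hvec w (C i)) x ≤ Real.sqrt (deg w x)) ∧
    (∀ x : Fin N, x ∉ C i →
        0 ≤ ((lazyA w ^ t) *ᵥ hvec w (C i)) x ∧
        ((lazyA w ^ t) *ᵥ hvec w (C i)) x ≤ (t : ℝ) * α * Real.sqrt (deg w x)) := by
  set s : Fin N → ℝ := fun x => Real.sqrt (deg w x) with hs
  have hspos : ∀ x, 0 < s x := fun x => Real.sqrt_pos.mpr (hdeg x)
  have hssq : ∀ x, s x * s x = deg w x := fun x => Real.mul_self_sqrt (hdeg x).le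
  have hentry : ∀ x x', nadj w x x' = w x x' / (s x * s x') := by
    intro x x'
    simp [nadj, Real.sqrt_mul (hdeg x).le, hs]
  have hentry_nn : ∀ x x', 0 ≤ nadj w x x' := by
    intro x x'
    rw [hentry]
    exact div_nonneg (hnonneg x x') (mul_nonneg (hspos x).le (hspos x').le)
  -- partial weighted row sums
  have hpartial : ∀ (x : Fin N) (A : Finset (Fin N)),
      ∑ x' ∈ A, nadj w x x' * s x' = (∑ x' ∈ A, w x x') / s x := by
    intro x A
    rw [Finset.sum_div]
    refine Finset.sum_congr rfl fun x' _ => ?_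
    rw [hentry, div_mul_eq_mul_div, mul_comm (s x) (s x'), ← div_div,
      mul_div_cancel_right₀ _ (hspos x').ne']
  have hds : ∀ x, deg w x / s x = s x := by
    intro x
    rw [← hssq x, mul_div_assoc, div_self (hspos x).ne', mul_one]
  have hrow : ∀ x, ∑ x', nadj w x x' * s x' = s x := by
    intro x
    rw [show (Finset.univ : Finset (Fin N)) = Finset.univ from rfl, hpartial x Finset.univ]
    exact hds x
  -- w(x, C i) bounds
  have hci_lb : ∀ x ∈ C i, (1 - α) * deg w x ≤ ∑ x' ∈ C i, w x x' := by
    intro x hx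
    have h1 : ∑ x' ∈ (C i)ᶜ, w x x' + ∑ x' ∈ C i, w x x' = deg w x := by
      rw [deg, ← Finset.sum_add_sum_compl (C i) (w x)]; ring
    have := hexp i x hx
    nlinarith [hdeg x]
  have hci_ub : ∀ x, x ∉ C i → ∑ x' ∈ C i, w x x' ≤ α * deg w x := by
    intro x hx
    obtain ⟨j, hj, huniq⟩ := hpart x
    have hsub : C i ⊆ (C j)ᶜ := by
      intro x' hx'
      simp only [Finset.mem_compl]
      intro hx'j
      obtain ⟨k, hk, huk⟩ := hpart x'
      have h1 := huk i hx'
      have h2 := huk j hx'j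
      exact hx (by rw [h1, ← h2]; exact hj)
    calc ∑ x' ∈ C i, w x x' ≤ ∑ x' ∈ (C j)ᶜ, w x x' :=
          Finset.sum_le_sum_of_subset_of_nonneg hsub (fun x' _ _ => hnonneg x x')
      _ ≤ α * deg w x := hexp j x hj
  have hcompl_ub : ∀ x, ∑ x' ∈ (C i)ᶜ, w x x' ≤ deg w x := by
    intro x
    exact Finset.sum_le_sum_of_subset_of_nonneg (Finset.subset_univ _)
      (fun x' _ _ => hnonneg x x')
  -- one-step formula
  have hmul : ∀ (u : Fin N → ℝ) (x : Fin N), (lazyA w *ᵥ u) x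
      = (1/2) * u x + (1/2) * ∑ x', nadj w x x' * u x' := by
    intro u x
    rw [lazyA, Matrix.add_mulVec, Matrix.smul_mulVec, Matrix.smul_mulVec,
      Matrix.one_mulVec]
    simp [Matrix.mulVec, dotProduct, Finset.mul_sum]
  -- main induction
  have main : ∀ t : ℕ, (t : ℝ) * α ≤ 1 → ∀ x : Fin N,
      0 ≤ ((lazyA w ^ t) *ᵥ hvec w (C i)) x ∧
      ((lazyA w ^ t) *ᵥ hvec w (C i)) x ≤ s x ∧
      (x ∈ C i → (1 - (t : ℝ) * α) * s x ≤ ((lazyA w ^ t) *ᵥ hvec w (C i)) x) ∧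
      (x ∉ C i → ((lazyA w ^ t) *ᵥ hvec w (C i)) x ≤ (t : ℝ) * α * s x) := by
    intro t
    induction t with
    | zero =>
      intro _ x
      simp only [pow_zero, Matrix.one_mulVec, hvec, Nat.cast_zero, zero_mul]
      by_cases hx : x ∈ C i <;> simp [hx, (hspos x).le, hs]
    | succ t ih =>
      intro ht1 x
      have htle : (t : ℝ) ≤ (t : ℝ) + 1 := by linarith
      have ht' : (t : ℝ) * α ≤ 1 := by
        refine le_trans ?_ ht1
        push_cast
        nlinarith
      have ht0 : 0 ≤ (t : ℝ) * α := by positivity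
      set u : Fin N → ℝ := (lazyA w ^ t) *ᵥ hvec w (C i) with hu
      have hrw : (lazyA w ^ (t + 1)) *ᵥ hvec w (C i) = lazyA w *ᵥ u := by
        rw [hu, Matrix.mulVec_mulVec, ← pow_succ']
      rw [hrw, hmul u x]
      have ihx := ih ht'
      -- sum bounds
      have hsum_nn : 0 ≤ ∑ x', nadj w x x' * u x' :=
        Finset.sum_nonneg fun x' _ => mul_nonneg (hentry_nn x x') (ihx x').1
      have hsum_ub : ∑ x', nadj w x x' * u x' ≤ s x := by
        calc ∑ x', nadj w x x' * u x' ≤ ∑ x', nadj w x x' * s x' :=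
              Finset.sum_le_sum fun x' _ =>
                mul_le_mul_of_nonneg_left (ihx x').2.1 (hentry_nn x x')
          _ = s x := hrow x
      constructor
      · linarith [(ihx x).1, hsum_nn]
      refine ⟨by nlinarith [(ihx x).2.1, hspos x], ?_, ?_⟩
      · -- lower bound for x ∈ C i
        intro hx
        have hlow : (1 - (t : ℝ) * α) * ((1 - α) * s x) ≤ ∑ x', nadj w x x' * u x' := by
          have h1 : ∑ x' ∈ C i, nadj w x x' * ((1 - (t : ℝ) * α) * s x')
              ≤ ∑ x' ∈ C i, nadj w x x' * u x' :=
            Finset.sum_le_sum fun x' hx' =>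
              mul_le_mul_of_nonneg_left ((ihx x').2.2.1 hx') (hentry_nn x x')
          have h2 : ∑ x' ∈ C i, nadj w x x' * u x' ≤ ∑ x', nadj w x x' * u x' :=
            Finset.sum_le_sum_of_subset_of_nonneg (Finset.subset_univ _)
              (fun x' _ _ => mul_nonneg (hentry_nn x x') (ihx x').1)
          have h3 : ∑ x' ∈ C i, nadj w x x' * ((1 - (t : ℝ) * α) * s x')
              = (1 - (t : ℝ) * α) * ((∑ x' ∈ C i, w x x') / s x) := by
            rw [← hpartial x (C i), Finset.mul_sum]
            exact Finset.sum_congr rfl fun x' _ => by ring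
          have h4 : (1 - α) * s x ≤ (∑ x' ∈ C i, w x x') / s x := by
            rw [le_div_iff₀ (hspos x)]
            calc (1 - α) * s x * s x = (1 - α) * deg w x := by rw [mul_assoc, hssq]
              _ ≤ ∑ x' ∈ C i, w x x' := hci_lb x hx
          have h5 : (1 - (t : ℝ) * α) * ((1 - α) * s x)
              ≤ (1 - (t : ℝ) * α) * ((∑ x' ∈ C i, w x x') / s x) := by
            apply mul_le_mul_of_nonneg_left h4; linarith
          linarith [h1, h2, h3 ▸ h5]
        have hux := (ihx x).2.2.1 hx
        push_cast
        nlinarith [hspos x]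
      · -- upper bound for x ∉ C i
        intro hx
        have hsplit : ∑ x', nadj w x x' * u x'
            = ∑ x' ∈ C i, nadj w x x' * u x' + ∑ x' ∈ (C i)ᶜ, nadj w x x' * u x' :=
          (Finset.sum_add_sum_compl (C i) _).symm
        have hA : ∑ x' ∈ C i, nadj w x x' * u x' ≤ α * s x := by
          calc ∑ x' ∈ C i, nadj w x x' * u x'
              ≤ ∑ x' ∈ C i, nadj w x x' * s x' :=
                Finset.sum_le_sum fun x' _ =>
                  mul_le_mul_of_nonneg_left (ihx x').2.1 (hentry_nn x x')
            _ = (∑ x' ∈ C i, w x x') / s x := hpartial x (C i)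
            _ ≤ α * deg w x / s x := by
                gcongr
                exact hci_ub x hx
            _ = α * s x := by rw [mul_div_assoc, hds]
        have hB : ∑ x' ∈ (C i)ᶜ, nadj w x x' * u x' ≤ (t : ℝ) * α * s x := by
          calc ∑ x' ∈ (C i)ᶜ, nadj w x x' * u x'
              ≤ ∑ x' ∈ (C i)ᶜ, nadj w x x' * ((t : ℝ) * α * s x') := by
                refine Finset.sum_le_sum fun x' hx' => ?_
                exact mul_le_mul_of_nonneg_left
                  ((ihx x').2.2.2 (Finset.mem_compl.mp hx')) (hentry_nn x x')
            _ = (t : ℝ) * α * ((∑ x' ∈ (C i)ᶜ, w x x') / s x) := by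
                rw [← hpartial x ((C i)ᶜ), Finset.mul_sum]
                exact Finset.sum_congr rfl fun x' _ => by ring
            _ ≤ (t : ℝ) * α * s x := by
                apply mul_le_mul_of_nonneg_left _ ht0
                rw [div_le_iff₀ (hspos x), hssq x]
                exact hcompl_ub x
        have hux := (ihx x).2.2.2 hx
        push_cast
        nlinarith [hspos x]
  have h := main t ht
  exact ⟨fun x hx => ⟨(h x).2.2.1 hx, (h x).2.1⟩,
    fun x hx => ⟨(h x).1, (h x).2.2.2 hx⟩⟩
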